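/- Let A be a positive symmetric densely defined operator on a Hilbert space with finite equal deficiency indices [m,m], m ≥ 1. Then A admits more than one semibounded self-adjoint extension. Consequently, if a positive symmetric operator has a unique semibounded self-adjoint extension, it is essentially self-adjoint. -/

import Mathlib

open scoped InnerProductSpace

/-- The deficiency space `ker(A* - c)` of a densely defined operator `A`. -/
noncomputable def deficiencySpace {H : Type*} [NormedAddCommGroup H]
    [InnerProductSpace ℂ H] [CompleteSpace H] (A : H →ₗ.[ℂ] H) (c : ℂ) :
    Submodule ℂ A.adjoint.domain :=
  LinearMap.ker (A.adjoint.toFun - c • A.adjoint.domain.subtype)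

/-- A semibounded self-adjoint extension of `A`. -/
def IsSemibddSAExt {H : Type*} [NormedAddCommGroup H]
    [InnerProductSpace ℂ H] [CompleteSpace H] (A S : H →ₗ.[ℂ] H) : Prop :=
  A ≤ S ∧ S.adjoint = S ∧
    ∃ c : ℝ, ∀ x : S.domain, c * ‖(x : H)‖ ^ 2 ≤ (inner ℂ (x : H) (S x) : ℂ).re

namespace St18

variable {H : Type*} [NormedAddCommGroup H] [InnerProductSpace ℂ H] [CompleteSpace H]
variable {A : H →ₗ.[ℂ] H}
set_option linter.unusedSectionVars false

theorem hfa (hsym : ∀ x y : A.domain, (inner ℂ (A x) (y : H) : ℂ) = inner ℂ (x : H) (A y)) :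
    A.IsFormalAdjoint A := fun x y => hsym x y

theorem hAle (hdense : Dense (A.domain : Set H))
    (hsym : ∀ x y : A.domain, (inner ℂ (A x) (y : H) : ℂ) = inner ℂ (x : H) (A y)) :
    A ≤ A.adjoint :=
  LinearPMap.IsFormalAdjoint.le_adjoint hdense (hfa hsym)

theorem adjClosed (hdense : Dense (A.domain : Set H)) : A.adjoint.IsClosed := by
  have hset : (A.adjoint.graph : Set (H × H)) =
      {p : H × H | ∀ x : A.domain, (inner ℂ p.2 (x : H) : ℂ) = inner ℂ p.1 (A x)} := by
    ext ⟨y, z⟩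
    constructor
    · intro hp
      rcases A.adjoint.mem_graph_iff.1 hp with ⟨u, hu1, hu2⟩
      intro x
      subst hu1
      rw [← hu2]
      exact LinearPMap.adjoint_isFormalAdjoint hdense u x
    · intro hp
      have hy : y ∈ A.adjoint.domain :=
        LinearPMap.mem_adjoint_domain_of_exists y ⟨z, hp⟩
      have : A.adjoint ⟨y, hy⟩ = z := LinearPMap.adjoint_apply_eq hdense ⟨y, hy⟩ hp
      exact A.adjoint.mem_graph_iff.2 ⟨⟨y, hy⟩, rfl, this⟩
  rw [LinearPMap.IsClosed, hset]
  have : {p : H × H | ∀ x : A.domain, (inner ℂ p.2 (x : H) : ℂ) = inner ℂ p.1 (A x)} =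
      ⋂ x : A.domain, {p : H × H | (inner ℂ p.2 (x : H) : ℂ) = inner ℂ p.1 (A x)} := by
    ext p; simp [Set.mem_iInter]
  rw [this]
  refine isClosed_iInter fun x => isClosed_eq ?_ ?_
  · exact (continuous_snd.inner continuous_const)
  · exact (continuous_fst.inner continuous_const)

theorem hclosable (hdense : Dense (A.domain : Set H))
    (hsym : ∀ x y : A.domain, (inner ℂ (A x) (y : H) : ℂ) = inner ℂ (x : H) (A y)) :
    A.IsClosable :=
  (adjClosed hdense).isClosable.leIsClosable (hAle hdense hsym)

theorem closure_ind (hdense : Dense (A.domain : Set H))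
    (hsym : ∀ x y : A.domain, (inner ℂ (A x) (y : H) : ℂ) = inner ℂ (x : H) (A y))
    {C : H × H → Prop} (hC : IsClosed {p | C p})
    (h : ∀ x : A.domain, C (x, A x)) (x : A.closure.domain) : C (x, A.closure x) := by
  have hx : ((x : H), A.closure x) ∈ A.closure.graph := A.closure.mem_graph x
  rw [← (hclosable hdense hsym).graph_closure_eq_closure_graph] at hx
  have hsub : (A.graph : Set (H × H)) ⊆ {p | C p} := by
    rintro p hp
    rcases A.mem_graph_iff.1 hp with ⟨u, hu1, hu2⟩
    have : p = ((u : H), A u) := by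
      cases p; simp only [Prod.mk.injEq]; exact ⟨hu1.symm, hu2.symm⟩
    rw [this]
    exact h u
  have : (A.graph.topologicalClosure : Set (H × H)) ⊆ {p | C p} := by
    rw [Submodule.topologicalClosure_coe]
    calc closure (A.graph : Set (H × H)) ⊆ closure {p | C p} := closure_mono hsub
      _ = {p | C p} := hC.closure_eq
  exact this hx

theorem posC (hdense : Dense (A.domain : Set H))
    (hsym : ∀ x y : A.domain, (inner ℂ (A x) (y : H) : ℂ) = inner ℂ (x : H) (A y))
    (hpos : ∀ x : A.domain, 0 ≤ (inner ℂ (x : H) (A x) : ℂ).re)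
    (x : A.closure.domain) : 0 ≤ (inner ℂ (x : H) (A.closure x) : ℂ).re := by
  refine closure_ind hdense hsym (C := fun p => 0 ≤ (inner ℂ p.1 p.2 : ℂ).re) ?_ hpos x
  exact isClosed_le continuous_const
    (Complex.continuous_re.comp (continuous_fst.inner continuous_snd))

theorem symC (hdense : Dense (A.domain : Set H))
    (hsym : ∀ x y : A.domain, (inner ℂ (A x) (y : H) : ℂ) = inner ℂ (x : H) (A y))
    (x y : A.closure.domain) :
    (inner ℂ (A.closure x) (y : H) : ℂ) = inner ℂ (x : H) (A.closure y) := by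
  have step1 : ∀ (u : A.domain) (y : A.closure.domain),
      (inner ℂ (A u) (y : H) : ℂ) = inner ℂ (u : H) (A.closure y) := by
    intro u y
    refine closure_ind hdense hsym
      (C := fun p => (inner ℂ (A u) p.1 : ℂ) = inner ℂ (u : H) p.2) ?_ (fun v => hsym u v) y
    exact isClosed_eq (continuous_const.inner continuous_fst)
      (continuous_const.inner continuous_snd)
  refine closure_ind hdense hsym
    (C := fun p => (inner ℂ p.2 (y : H) : ℂ) = inner ℂ p.1 (A.closure y)) ?_
    (fun u => step1 u y) x
  exact isClosed_eq (continuous_snd.inner continuous_const)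
    (continuous_fst.inner continuous_const)

theorem adjC (hdense : Dense (A.domain : Set H))
    (hsym : ∀ x y : A.domain, (inner ℂ (A x) (y : H) : ℂ) = inner ℂ (x : H) (A y))
    (y : A.adjoint.domain) (x : A.closure.domain) :
    (inner ℂ (A.adjoint y) (x : H) : ℂ) = inner ℂ (y : H) (A.closure x) := by
  refine closure_ind hdense hsym
    (C := fun p => (inner ℂ (A.adjoint y) p.1 : ℂ) = inner ℂ (y : H) p.2) ?_
    (fun u => LinearPMap.adjoint_isFormalAdjoint hdense y u) x
  exact isClosed_eq (continuous_const.inner continuous_fst)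
    (continuous_const.inner continuous_snd)

/-- The real eigenspace of the adjoint at `-t`, described without the adjoint. -/
def Nt (A : H →ₗ.[ℂ] H) (t : ℝ) : Submodule ℂ H where
  carrier := {y | ∀ x : A.domain, (inner ℂ (A x) y : ℂ) = -(t : ℂ) * inner ℂ (x : H) y}
  zero_mem' := by simp
  add_mem' := by
    intro y z hy hz x
    simp only [inner_add_right, hy x, hz x]
    ring
  smul_mem' := by
    intro c y hy x
    simp only [inner_smul_right, hy x]
    ring

theorem NtC (hdense : Dense (A.domain : Set H))
    (hsym : ∀ x y : A.domain, (inner ℂ (A x) (y : H) : ℂ) = inner ℂ (x : H) (A y))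
    {t : ℝ} {y : H} (hy : y ∈ Nt A t) (x : A.closure.domain) :
    (inner ℂ (A.closure x) y : ℂ) = -(t : ℂ) * inner ℂ (x : H) y := by
  refine closure_ind hdense hsym
    (C := fun p => (inner ℂ p.2 y : ℂ) = -(t : ℂ) * inner ℂ p.1 y) ?_ (fun u => hy u) x
  exact isClosed_eq (continuous_snd.inner continuous_const)
    (continuous_const.mul (continuous_fst.inner continuous_const))

/-- `Nt` as a partial linear map, acting as `-t`. -/
def Npm (A : H →ₗ.[ℂ] H) (t : ℝ) : H →ₗ.[ℂ] H :=
  ⟨Nt A t, (-(t : ℂ)) • (Nt A t).subtype⟩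

@[simp] theorem Npm_apply {t : ℝ} (y : (Npm A t).domain) :
    Npm A t y = -(t : ℂ) • (y : H) := rfl

theorem denseC (hdense : Dense (A.domain : Set H)) :
    Dense (A.closure.domain : Set H) :=
  hdense.mono (show (A.domain : Set H) ⊆ A.closure.domain from (LinearPMap.le_closure A).1)

theorem compat (hdense : Dense (A.domain : Set H))
    (hsym : ∀ x y : A.domain, (inner ℂ (A x) (y : H) : ℂ) = inner ℂ (x : H) (A y)) {t : ℝ} :
    ∀ (x : A.closure.domain) (y : (Npm A t).domain), (x : H) = y →
      A.closure x = Npm A t y := by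
  intro x y hxy
  rw [Npm_apply]
  refine (denseC hdense).eq_of_inner_right ℂ fun vH hv => ?_
  obtain ⟨v, rfl⟩ : ∃ v : A.closure.domain, (v : H) = vH := ⟨⟨vH, hv⟩, rfl⟩
  have h1 : (inner ℂ (v : H) (A.closure x) : ℂ) = inner ℂ (A.closure v) (x : H) :=
    (symC hdense hsym v x).symm
  have hyN : (y : H) ∈ Nt A t := y.2
  rw [h1, hxy, NtC hdense hsym hyN v, inner_smul_right]

/-- The self-adjoint extension: `A.closure` extended by the eigenspace `Nt` at `-t`. -/
noncomputable def Sext (A : H →ₗ.[ℂ] H) (hdense : Dense (A.domain : Set H))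
    (hsym : ∀ x y : A.domain, (inner ℂ (A x) (y : H) : ℂ) = inner ℂ (x : H) (A y))
    (t : ℝ) : H →ₗ.[ℂ] H :=
  A.closure.sup (Npm A t) (compat hdense hsym)

theorem Sext_domain (hdense : Dense (A.domain : Set H))
    (hsym : ∀ x y : A.domain, (inner ℂ (A x) (y : H) : ℂ) = inner ℂ (x : H) (A y)) (t : ℝ) :
    (Sext A hdense hsym t).domain = A.closure.domain ⊔ Nt A t := rfl

theorem Sext_apply (hdense : Dense (A.domain : Set H))
    (hsym : ∀ x y : A.domain, (inner ℂ (A x) (y : H) : ℂ) = inner ℂ (x : H) (A y)) {t : ℝ}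
    (x : A.closure.domain) (y : (Npm A t).domain) (z : (Sext A hdense hsym t).domain)
    (hz : (x : H) + (y : H) = (z : H)) :
    Sext A hdense hsym t z = A.closure x + -(t : ℂ) • (y : H) :=
  LinearPMap.sup_apply (compat hdense hsym) x y z hz

theorem A_le_Sext (hdense : Dense (A.domain : Set H))
    (hsym : ∀ x y : A.domain, (inner ℂ (A x) (y : H) : ℂ) = inner ℂ (x : H) (A y)) (t : ℝ) :
    A ≤ Sext A hdense hsym t :=
  le_trans (LinearPMap.le_closure A) (LinearPMap.left_le_sup _ _ _)

/-- The map `A.closure + t`. -/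
noncomputable def Lmap (A : H →ₗ.[ℂ] H) (t : ℝ) : A.closure.domain →ₗ[ℂ] H :=
  A.closure.toFun + (t : ℂ) • A.closure.domain.subtype

theorem Lmap_apply {t : ℝ} (x : A.closure.domain) :
    Lmap A t x = A.closure x + (t : ℂ) • (x : H) := rfl

theorem inner_L_self (hdense : Dense (A.domain : Set H))
    (hsym : ∀ x y : A.domain, (inner ℂ (A x) (y : H) : ℂ) = inner ℂ (x : H) (A y))
    {t : ℝ} (x : A.closure.domain) :
    (inner ℂ (x : H) (Lmap A t x) : ℂ).re
      = (inner ℂ (x : H) (A.closure x) : ℂ).re + t * ‖(x : H)‖ ^ 2 := by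
  rw [Lmap_apply, inner_add_right, inner_smul_right, Complex.add_re, Complex.re_ofReal_mul]
  congr 1
  rw [← RCLike.re_to_complex]
  exact congrArg (t * ·) (inner_self_eq_norm_sq (𝕜 := ℂ) (x : H))

theorem norm_le_L (hdense : Dense (A.domain : Set H))
    (hsym : ∀ x y : A.domain, (inner ℂ (A x) (y : H) : ℂ) = inner ℂ (x : H) (A y))
    (hpos : ∀ x : A.domain, 0 ≤ (inner ℂ (x : H) (A x) : ℂ).re)
    {t : ℝ} (ht : 1 ≤ t) (x : A.closure.domain) : ‖(x : H)‖ ≤ ‖Lmap A t x‖ := by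
  have h1 := posC hdense hsym hpos x
  have h2 := inner_L_self hdense hsym (t := t) x
  have h3 : (inner ℂ (x : H) (Lmap A t x) : ℂ).re ≤ ‖(x : H)‖ * ‖Lmap A t x‖ := by
    simpa using re_inner_le_norm (𝕜 := ℂ) (x : H) (Lmap A t x)
  rcases eq_or_lt_of_le (norm_nonneg (x : H)) with h4 | h4
  · rw [← h4]; exact norm_nonneg _
  · nlinarith [norm_nonneg (Lmap A t x)]

theorem Rclosed (hdense : Dense (A.domain : Set H))
    (hsym : ∀ x y : A.domain, (inner ℂ (A x) (y : H) : ℂ) = inner ℂ (x : H) (A y))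
    (hpos : ∀ x : A.domain, 0 ≤ (inner ℂ (x : H) (A x) : ℂ).re)
    {t : ℝ} (ht : 1 ≤ t) :
    IsClosed ((LinearMap.range (Lmap A t) : Submodule ℂ H) : Set H) := by
  refine IsSeqClosed.isClosed ?_
  intro f z hf hz
  choose u hu using hf
  have hcf : CauchySeq f := hz.cauchySeq
  have hcu : CauchySeq fun n => ((u n : H)) := by
    rw [Metric.cauchySeq_iff] at hcf ⊢
    intro ε hε
    obtain ⟨N, hN⟩ := hcf ε hε
    refine ⟨N, fun m hm n hn => ?_⟩
    have h5 := hN m hm n hn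
    rw [dist_eq_norm] at h5 ⊢
    have hle : ‖(u m : H) - (u n : H)‖ ≤ ‖f m - f n‖ := by
      calc ‖(u m : H) - (u n : H)‖ = ‖((u m - u n : A.closure.domain) : H)‖ := by
            rw [Submodule.coe_sub]
        _ ≤ ‖Lmap A t (u m - u n)‖ := norm_le_L hdense hsym hpos ht _
        _ = ‖f m - f n‖ := by rw [map_sub, hu, hu]
    exact lt_of_le_of_lt hle h5
  obtain ⟨x, hx⟩ := cauchySeq_tendsto_of_complete hcu
  have hAu : Filter.Tendsto (fun n => A.closure (u n)) Filter.atTop (nhds (z - (t : ℂ) • x)) := by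
    have heq : (fun n => A.closure (u n)) = fun n => f n - (t : ℂ) • (u n : H) := by
      funext n
      have := hu n
      rw [Lmap_apply] at this
      rw [← this]; abel
    rw [heq]
    exact hz.sub (hx.const_smul _)
  have hmem : ((x : H), z - (t : ℂ) • x) ∈ A.closure.graph := by
    have hcl : IsClosed (A.closure.graph : Set (H × H)) :=
      (hclosable hdense hsym).closure_isClosed
    refine hcl.mem_of_tendsto (hx.prodMk_nhds hAu) (Filter.Eventually.of_forall fun n => ?_)
    exact A.closure.mem_graph (u n)
  rcases A.closure.mem_graph_iff.1 hmem with ⟨w, hw1, hw2⟩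
  refine ⟨w, ?_⟩
  rw [Lmap_apply, hw2, hw1]
  module

theorem orthN (hdense : Dense (A.domain : Set H))
    (hsym : ∀ x y : A.domain, (inner ℂ (A x) (y : H) : ℂ) = inner ℂ (x : H) (A y)) (t : ℝ) :
    (LinearMap.range (Lmap A t))ᗮ = Nt A t := by
  ext y
  rw [Submodule.mem_orthogonal]
  constructor
  · intro h x
    have hx' : (x : H) ∈ A.closure.domain := (LinearPMap.le_closure A).1 x.2
    have h0 := h _ (⟨⟨(x : H), hx'⟩, rfl⟩ : Lmap A t ⟨(x : H), hx'⟩ ∈ LinearMap.range (Lmap A t))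
    have hval : A.closure ⟨(x : H), hx'⟩ = A x := ((LinearPMap.le_closure A).2 rfl).symm
    rw [Lmap_apply, hval, inner_add_left, inner_smul_left, Complex.conj_ofReal] at h0
    have : (inner ℂ (A x) y : ℂ) = -((t : ℂ) * inner ℂ (x : H) y) := by linear_combination h0
    rw [this]; ring
  · intro hy u hu
    rcases hu with ⟨x, rfl⟩
    rw [Lmap_apply, inner_add_left, inner_smul_left, Complex.conj_ofReal,
      NtC hdense hsym hy x]
    ring

theorem decompZ (hdense : Dense (A.domain : Set H))
    (hsym : ∀ x y : A.domain, (inner ℂ (A x) (y : H) : ℂ) = inner ℂ (x : H) (A y))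
    (hpos : ∀ x : A.domain, 0 ≤ (inner ℂ (x : H) (A x) : ℂ).re)
    {t : ℝ} (ht : 1 ≤ t) (z : H) :
    ∃ (x : A.closure.domain) (w : H), w ∈ Nt A t ∧ z = Lmap A t x + w := by
  haveI : CompleteSpace (LinearMap.range (Lmap A t)) :=
    (Rclosed hdense hsym hpos ht).completeSpace_coe
  obtain ⟨y, hy, w, hw, hzw⟩ :=
    Submodule.exists_add_mem_mem_orthogonal (K := LinearMap.range (Lmap A t)) z
  rcases hy with ⟨x, rfl⟩
  rw [orthN hdense hsym] at hw
  exact ⟨x, w, hw, hzw⟩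

theorem le_mk {f g : H →ₗ.[ℂ] H} (h1 : f.domain ≤ g.domain)
    (h2 : ∀ ⦃x : f.domain⦄ ⦃y : g.domain⦄, (x : H) = (y : H) → f x = g y) : f ≤ g :=
  ⟨h1, h2⟩

theorem re_inner_self (x : H) : (inner ℂ x x : ℂ).re = ‖x‖ ^ 2 := by
  rw [← RCLike.re_to_complex]
  exact inner_self_eq_norm_sq (𝕜 := ℂ) x

theorem denseS (hdense : Dense (A.domain : Set H))
    (hsym : ∀ x y : A.domain, (inner ℂ (A x) (y : H) : ℂ) = inner ℂ (x : H) (A y)) (t : ℝ) :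
    Dense ((Sext A hdense hsym t).domain : Set H) :=
  hdense.mono (show (A.domain : Set H) ⊆ (Sext A hdense hsym t).domain from
    fun x hx => ((A_le_Sext hdense hsym t).1 hx))

theorem memS (hdense : Dense (A.domain : Set H))
    (hsym : ∀ x y : A.domain, (inner ℂ (A x) (y : H) : ℂ) = inner ℂ (x : H) (A y)) {t : ℝ}
    (x₀ : A.closure.domain) {φ : H} (hφ : φ ∈ Nt A t) :
    (x₀ : H) + φ ∈ (Sext A hdense hsym t).domain :=
  Submodule.mem_sup.2 ⟨x₀, x₀.2, φ, hφ, rfl⟩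

theorem Sval (hdense : Dense (A.domain : Set H))
    (hsym : ∀ x y : A.domain, (inner ℂ (A x) (y : H) : ℂ) = inner ℂ (x : H) (A y)) {t : ℝ}
    (x : (Sext A hdense hsym t).domain) :
    ∃ x₀ : A.closure.domain, ((x : H) - x₀) ∈ Nt A t ∧
      Sext A hdense hsym t x = Lmap A t x₀ - (t : ℂ) • (x : H) := by
  obtain ⟨a, ha, φ, hφ, hx⟩ := Submodule.mem_sup.1 x.2
  refine ⟨⟨a, ha⟩, ?_, ?_⟩
  · have hd : (x : H) - a = φ := by rw [← hx]; abel
    rw [hd]; exact hφ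
  · rw [Sext_apply hdense hsym ⟨a, ha⟩ ⟨φ, hφ⟩ x hx, Lmap_apply, ← hx]
    module

theorem symL (hdense : Dense (A.domain : Set H))
    (hsym : ∀ x y : A.domain, (inner ℂ (A x) (y : H) : ℂ) = inner ℂ (x : H) (A y)) {t : ℝ}
    (a b : A.closure.domain) :
    (inner ℂ (Lmap A t a) (b : H) : ℂ) = inner ℂ (a : H) (Lmap A t b) := by
  rw [Lmap_apply, Lmap_apply, inner_add_left, inner_add_right, inner_smul_left,
    inner_smul_right, Complex.conj_ofReal, symC hdense hsym a b]

theorem orthL (hdense : Dense (A.domain : Set H))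
    (hsym : ∀ x y : A.domain, (inner ℂ (A x) (y : H) : ℂ) = inner ℂ (x : H) (A y)) {t : ℝ}
    (a : A.closure.domain) {φ : H} (hφ : φ ∈ Nt A t) :
    (inner ℂ (Lmap A t a) φ : ℂ) = 0 := by
  rw [← orthN hdense hsym t] at hφ
  exact (Submodule.mem_orthogonal _ φ).1 hφ _ ⟨a, rfl⟩

theorem symS (hdense : Dense (A.domain : Set H))
    (hsym : ∀ x y : A.domain, (inner ℂ (A x) (y : H) : ℂ) = inner ℂ (x : H) (A y)) {t : ℝ}
    (u v : (Sext A hdense hsym t).domain) :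
    (inner ℂ (Sext A hdense hsym t u) (v : H) : ℂ)
      = inner ℂ (u : H) (Sext A hdense hsym t v) := by
  obtain ⟨a, hφu, hSu⟩ := Sval hdense hsym u
  obtain ⟨b, hψv, hSv⟩ := Sval hdense hsym v
  rw [hSu, hSv]
  have e1 := symL hdense hsym (t := t) a b
  have e2 : (inner ℂ (Lmap A t a) ((v : H) - b) : ℂ) = 0 := orthL hdense hsym a hψv
  have e3 : (inner ℂ (Lmap A t b) ((u : H) - a) : ℂ) = 0 := orthL hdense hsym b hφu
  have e3' : (inner ℂ ((u : H) - a) (Lmap A t b) : ℂ) = 0 := by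
    rw [← inner_conj_symm, e3, map_zero]
  rw [inner_sub_left, inner_sub_right, inner_smul_left, inner_smul_right,
    Complex.conj_ofReal]
  rw [inner_sub_right] at e2
  rw [inner_sub_left] at e3'
  have e4 : (inner ℂ ((u : H)) ((v : H)) : ℂ) = inner ℂ ((u:H)) ((v:H)) := rfl
  linear_combination e1 + e2 - e3'

theorem semibddS (hdense : Dense (A.domain : Set H))
    (hsym : ∀ x y : A.domain, (inner ℂ (A x) (y : H) : ℂ) = inner ℂ (x : H) (A y))
    (hpos : ∀ x : A.domain, 0 ≤ (inner ℂ (x : H) (A x) : ℂ).re) {t : ℝ} (ht : 1 ≤ t)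
    (x : (Sext A hdense hsym t).domain) :
    -t * ‖(x : H)‖ ^ 2 ≤ (inner ℂ (x : H) (Sext A hdense hsym t x) : ℂ).re := by
  obtain ⟨a, hφ, hSx⟩ := Sval hdense hsym x
  have h1 : (inner ℂ (x : H) (Sext A hdense hsym t x) : ℂ)
      = inner ℂ ((x : H) - a) (Lmap A t a) + inner ℂ (a : H) (Lmap A t a)
        - (t : ℂ) * inner ℂ (x : H) (x : H) := by
    rw [hSx, inner_sub_right, inner_smul_right]
    rw [show (inner ℂ (x : H) (Lmap A t a) : ℂ)
      = inner ℂ ((x : H) - a) (Lmap A t a) + inner ℂ (a : H) (Lmap A t a) by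
        rw [inner_sub_left]; ring]
  have h2 : (inner ℂ ((x : H) - a) (Lmap A t a) : ℂ) = 0 := by
    rw [← inner_conj_symm, orthL hdense hsym a hφ, map_zero]
  rw [h1, h2, zero_add, Complex.sub_re, Complex.re_ofReal_mul, re_inner_self]
  have h3 := inner_L_self hdense hsym (t := t) a
  have h4 := posC hdense hsym hpos a
  nlinarith [sq_nonneg ‖(a : H)‖]

theorem selfadjS (hdense : Dense (A.domain : Set H))
    (hsym : ∀ x y : A.domain, (inner ℂ (A x) (y : H) : ℂ) = inner ℂ (x : H) (A y))
    (hpos : ∀ x : A.domain, 0 ≤ (inner ℂ (x : H) (A x) : ℂ).re) {t : ℝ} (ht : 1 ≤ t) :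
    (Sext A hdense hsym t).adjoint = Sext A hdense hsym t := by
  have hdS : Dense ((Sext A hdense hsym t).domain : Set H) := denseS hdense hsym t
  have hsymS : (Sext A hdense hsym t).IsFormalAdjoint (Sext A hdense hsym t) :=
    fun u v => symS hdense hsym u v
  have hSle : Sext A hdense hsym t ≤ (Sext A hdense hsym t).adjoint :=
    hsymS.le_adjoint hdS
  have hfa' := LinearPMap.adjoint_isFormalAdjoint hdS
  -- the main identity
  have main : ∀ (u : (Sext A hdense hsym t).adjoint.domain) (x₀ : A.closure.domain)
      (φ : H), φ ∈ Nt A t →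
      (inner ℂ ((Sext A hdense hsym t).adjoint u + (t : ℂ) • (u : H)) ((x₀ : H) + φ) : ℂ)
        = inner ℂ (u : H) (Lmap A t x₀) := by
    intro u x₀ φ hφ
    set x : (Sext A hdense hsym t).domain := ⟨(x₀ : H) + φ, memS hdense hsym x₀ hφ⟩
    have h1 := hfa' u x
    have h2 : Sext A hdense hsym t x = Lmap A t x₀ - (t : ℂ) • ((x₀ : H) + φ) := by
      have := Sext_apply hdense hsym x₀ ⟨φ, hφ⟩ x rfl
      rw [this, Lmap_apply]
      module
    rw [h2, inner_sub_right, inner_smul_right] at h1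
    rw [inner_add_left, inner_smul_left, Complex.conj_ofReal]
    have hx : (x : H) = (x₀ : H) + φ := rfl
    rw [← hx]
    linear_combination h1
  have hdom : (Sext A hdense hsym t).adjoint.domain ≤ (Sext A hdense hsym t).domain := by
    intro uH hu
    set u : (Sext A hdense hsym t).adjoint.domain := ⟨uH, hu⟩
    set z : H := (Sext A hdense hsym t).adjoint u + (t : ℂ) • uH with hz
    obtain ⟨w, η, hη, hzd⟩ := decompZ hdense hsym hpos ht z
    -- η = 0
    have hη0 : η = 0 := by
      have h0 := main u 0 η hη
      rw [← hz] at h0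
      rw [hzd] at h0
      simp only [Submodule.coe_zero, zero_add, map_zero, inner_zero_right] at h0
      rw [inner_add_left, orthL hdense hsym w hη] at h0
      have : (inner ℂ η η : ℂ) = 0 := by linear_combination h0
      exact inner_self_eq_zero.1 this
    -- uH - w ∈ Nt
    have hd : uH - (w : H) ∈ Nt A t := by
      rw [← orthN hdense hsym t]
      rw [Submodule.mem_orthogonal]
      rintro r ⟨x₀, rfl⟩
      have h0 := main u x₀ 0 (Nt A t).zero_mem
      rw [← hz, hzd, hη0, add_zero, add_zero] at h0
      rw [symL hdense hsym w x₀] at h0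
      have h0' : (inner ℂ ((w : H)) (Lmap A t x₀) : ℂ) = inner ℂ uH (Lmap A t x₀) := h0
      rw [← inner_conj_symm, inner_sub_left, ← h0', sub_self, map_zero]
    have : uH = (w : H) + (uH - w) := by abel
    rw [this]
    exact Submodule.mem_sup.2 ⟨w, w.2, uH - w, hd, rfl⟩
  have hval : ∀ ⦃x : (Sext A hdense hsym t).adjoint.domain⦄
      ⦃y : (Sext A hdense hsym t).domain⦄, (x : H) = (y : H) →
      (Sext A hdense hsym t).adjoint x = Sext A hdense hsym t y :=
    fun x y hxy => (hSle.2 hxy.symm).symm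
  exact le_antisymm (le_mk hdom hval) hSle

theorem distinct12 (hdense : Dense (A.domain : Set H))
    (hsym : ∀ x y : A.domain, (inner ℂ (A x) (y : H) : ℂ) = inner ℂ (x : H) (A y))
    (hpos : ∀ x : A.domain, 0 ≤ (inner ℂ (x : H) (A x) : ℂ).re)
    (heq : Sext A hdense hsym 1 = Sext A hdense hsym 2) :
    Nt A 1 = ⊥ := by
  by_contra hne
  obtain ⟨φ, hφmem, hφne⟩ := Submodule.exists_mem_ne_zero_of_ne_bot hne
  have hφdom : φ ∈ (Sext A hdense hsym 1).domain :=
    Submodule.mem_sup.2 ⟨0, (A.closure.domain).zero_mem, φ, hφmem, zero_add φ⟩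
  rw [heq] at hφdom
  obtain ⟨u, hu, ψ, hψ, hsum⟩ := Submodule.mem_sup.1 hφdom
  -- ψ = A.closure u + u
  have hkey : ∀ x : A.closure.domain,
      (inner ℂ (x : H) (A.closure ⟨u, hu⟩ + u - ψ) : ℂ) = 0 := by
    intro x
    have e1 : (inner ℂ (A.closure x) φ : ℂ) = -((1 : ℝ) : ℂ) * inner ℂ (x : H) φ :=
      NtC hdense hsym hφmem x
    rw [← hsum, inner_add_right, inner_add_right] at e1
    have e2 : (inner ℂ (A.closure x) ψ : ℂ) = -((2 : ℝ) : ℂ) * inner ℂ (x : H) ψ :=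
      NtC hdense hsym hψ x
    have e3 : (inner ℂ (A.closure x) u : ℂ) = inner ℂ (x : H) (A.closure ⟨u, hu⟩) :=
      symC hdense hsym x ⟨u, hu⟩
    rw [inner_sub_right, inner_add_right]
    push_cast at e1 e2 ⊢
    linear_combination e1 - e2 - e3
  have hψval : ψ = A.closure ⟨u, hu⟩ + u := by
    have h0 := (denseC hdense).eq_zero_of_inner_right ℂ (fun v hv => hkey ⟨v, hv⟩)
    have h1 : A.closure ⟨u, hu⟩ + u - ψ = 0 := h0
    linear_combination (norm := module) -h1
  set σ : ℂ := inner ℂ u ψ with hσ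
  have e5 : (inner ℂ (A.closure ⟨u, hu⟩) ψ : ℂ) = -((2 : ℝ) : ℂ) * σ :=
    NtC hdense hsym hψ ⟨u, hu⟩
  have e7 : (inner ℂ ψ ψ : ℂ) = -σ := by
    nth_rewrite 1 [hψval]
    rw [inner_add_left, e5]
    push_cast
    ring
  have e8 : σ = inner ℂ u (A.closure ⟨u, hu⟩) + inner ℂ u u := by
    rw [hσ, hψval, inner_add_right]
  have hposu : 0 ≤ (inner ℂ u (A.closure ⟨u, hu⟩) : ℂ).re := posC hdense hsym hpos ⟨u, hu⟩
  have hre7 : ‖ψ‖ ^ 2 = -σ.re := by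
    rw [← re_inner_self ψ, e7, Complex.neg_re]
  have hre8 : σ.re = (inner ℂ u (A.closure ⟨u, hu⟩) : ℂ).re + ‖u‖ ^ 2 := by
    rw [e8, Complex.add_re, re_inner_self]
  have hu0 : ‖u‖ ^ 2 = 0 ∧ ‖ψ‖ ^ 2 = 0 := by constructor <;> nlinarith [sq_nonneg ‖u‖, sq_nonneg ‖ψ‖]
  have hu00 : u = 0 := by
    have := hu0.1
    simpa using this
  have hψ00 : ψ = 0 := by
    have := hu0.2
    simpa using this
  apply hφne
  rw [← hsum, hu00, hψ00, add_zero]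

theorem isSemibddSAExt_Sext (hdense : Dense (A.domain : Set H))
    (hsym : ∀ x y : A.domain, (inner ℂ (A x) (y : H) : ℂ) = inner ℂ (x : H) (A y))
    (hpos : ∀ x : A.domain, 0 ≤ (inner ℂ (x : H) (A x) : ℂ).re) {t : ℝ} (ht : 1 ≤ t) :
    IsSemibddSAExt A (Sext A hdense hsym t) :=
  ⟨A_le_Sext hdense hsym t, selfadjS hdense hsym hpos ht,
    ⟨-t, fun x => semibddS hdense hsym hpos ht x⟩⟩

/-- If `Nt A t` is trivial then `A.closure + t` is surjective. -/
theorem surjL (hdense : Dense (A.domain : Set H))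
    (hsym : ∀ x y : A.domain, (inner ℂ (A x) (y : H) : ℂ) = inner ℂ (x : H) (A y))
    (hpos : ∀ x : A.domain, 0 ≤ (inner ℂ (x : H) (A x) : ℂ).re)
    {t : ℝ} (ht : 1 ≤ t) (hbot : Nt A t = ⊥) (z : H) :
    ∃ x : A.closure.domain, z = Lmap A t x := by
  obtain ⟨x, w, hw, hzw⟩ := decompZ hdense hsym hpos ht z
  rw [hbot, Submodule.mem_bot] at hw
  exact ⟨x, by rw [hzw, hw, add_zero]⟩

/-- If `Nt A 1 = ⊥`, then the deficiency space at `i` is trivial. -/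
theorem defPlus_eq_bot (hdense : Dense (A.domain : Set H))
    (hsym : ∀ x y : A.domain, (inner ℂ (A x) (y : H) : ℂ) = inner ℂ (x : H) (A y))
    (hpos : ∀ x : A.domain, 0 ≤ (inner ℂ (x : H) (A x) : ℂ).re)
    (hbot : Nt A 1 = ⊥) : deficiencySpace A Complex.I = ⊥ := by
  rw [Submodule.eq_bot_iff]
  rintro u hu
  rw [deficiencySpace, LinearMap.mem_ker, LinearMap.sub_apply, sub_eq_zero] at hu
  have hu' : A.adjoint u = Complex.I • (u : H) := hu
  -- find w with A.adjoint u + u = L w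
  obtain ⟨w, hw⟩ := surjL hdense hsym hpos le_rfl hbot (A.adjoint u + ((1:ℝ) : ℂ) • (u : H))
  -- u - w is orthogonal to the range of L
  have horth : (u : H) - (w : H) ∈ Nt A 1 := by
    rw [← orthN hdense hsym 1, Submodule.mem_orthogonal]
    rintro r ⟨x₀, rfl⟩
    have h1 : (inner ℂ (A.closure x₀) (u : H) : ℂ) = inner ℂ (x₀ : H) (A.adjoint u) := by
      rw [← inner_conj_symm, ← adjC hdense hsym u x₀, inner_conj_symm]
    have h2 : (inner ℂ (Lmap A 1 x₀) (u : H) : ℂ) = inner ℂ (x₀ : H) (Lmap A 1 w) := by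
      rw [Lmap_apply, inner_add_left, inner_smul_left, Complex.conj_ofReal, h1, ← hw,
        inner_add_right, inner_smul_right]
    rw [inner_sub_right, h2, symL hdense hsym x₀ w, sub_self]
  rw [hbot, Submodule.mem_bot] at horth
  have huw : (u : H) = (w : H) := by linear_combination (norm := module) horth
  -- A.adjoint u = A.closure w
  have hval : A.adjoint u = A.closure w := by
    have := hw
    rw [Lmap_apply, ← huw] at this
    have h3 : A.adjoint u + ((1:ℝ):ℂ) • (u : H) = A.closure w + ((1:ℝ):ℂ) • (u : H) := this
    exact add_right_cancel h3
  -- realness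
  have hreal : (inner ℂ ((w : H)) (A.closure w) : ℂ) =
      (starRingEnd ℂ) (inner ℂ ((w : H)) (A.closure w) : ℂ) := by
    rw [inner_conj_symm, symC hdense hsym w w]
  have him : (inner ℂ ((w : H)) (A.closure w) : ℂ).im = 0 := by
    have := congrArg Complex.im hreal
    rw [Complex.conj_im] at this
    linarith
  have hIu : (inner ℂ ((w : H)) (A.closure w) : ℂ) = Complex.I * inner ℂ (u : H) (u : H) := by
    rw [← hval, hu', ← huw, inner_smul_right]
  have hnorm : ‖(u : H)‖ ^ 2 = 0 := by
    have h4 := congrArg Complex.im hIu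
    rw [him] at h4
    have h5 : (Complex.I * (inner ℂ (u : H) (u : H) : ℂ)).im = (inner ℂ (u : H) (u : H) : ℂ).re := by
      rw [Complex.mul_im, Complex.I_re, Complex.I_im]
      ring
    rw [h5, re_inner_self] at h4
    linarith
  have : (u : H) = 0 := by simpa using hnorm
  exact Subtype.ext this

theorem Nt_one_ne_bot (hdense : Dense (A.domain : Set H))
    (hsym : ∀ x y : A.domain, (inner ℂ (A x) (y : H) : ℂ) = inner ℂ (x : H) (A y))
    (hpos : ∀ x : A.domain, 0 ≤ (inner ℂ (x : H) (A x) : ℂ).re)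
    {m : ℕ} (hm : 1 ≤ m) (hdefPlus : Module.finrank ℂ (deficiencySpace A Complex.I) = m) :
    Nt A 1 ≠ ⊥ := by
  intro hbot
  rw [defPlus_eq_bot hdense hsym hpos hbot] at hdefPlus
  rw [finrank_bot] at hdefPlus
  omega

/-- If `Nt A 1 = ⊥`, then the closure of `A` is self-adjoint. -/
theorem closure_selfadjoint (hdense : Dense (A.domain : Set H))
    (hsym : ∀ x y : A.domain, (inner ℂ (A x) (y : H) : ℂ) = inner ℂ (x : H) (A y))
    (hpos : ∀ x : A.domain, 0 ≤ (inner ℂ (x : H) (A x) : ℂ).re)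
    (hbot : Nt A 1 = ⊥) : A.closure.adjoint = A.closure := by
  have hdC : Dense (A.closure.domain : Set H) := denseC hdense
  have hsymC : A.closure.IsFormalAdjoint A.closure := fun x y => symC hdense hsym x y
  have hCle : A.closure ≤ A.closure.adjoint := hsymC.le_adjoint hdC
  have hfaC := LinearPMap.adjoint_isFormalAdjoint hdC
  have hdom : A.closure.adjoint.domain ≤ A.closure.domain := by
    intro uH hu
    set u : A.closure.adjoint.domain := ⟨uH, hu⟩
    obtain ⟨w, hw⟩ := surjL hdense hsym hpos le_rfl hbot
      (A.closure.adjoint u + ((1:ℝ) : ℂ) • uH)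
    have horth : ∀ z : H, (inner ℂ z (uH - (w : H)) : ℂ) = 0 := by
      intro z
      obtain ⟨x₀, rfl⟩ := surjL hdense hsym hpos le_rfl hbot z
      have h1 : (inner ℂ (A.closure x₀) uH : ℂ) = inner ℂ (x₀ : H) (A.closure.adjoint u) := by
        rw [← inner_conj_symm ((x₀ : H)) ((A.closure.adjoint) u), hfaC u x₀, inner_conj_symm]
      have h2 : (inner ℂ (Lmap A 1 x₀) uH : ℂ) = inner ℂ (x₀ : H) (Lmap A 1 w) := by
        rw [Lmap_apply, inner_add_left, inner_smul_left, Complex.conj_ofReal, h1, ← hw,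
          inner_add_right, inner_smul_right]
      rw [inner_sub_right, h2, symL hdense hsym x₀ w, sub_self]
    have h0 : uH - (w : H) = 0 := by
      have := horth (uH - (w : H))
      exact inner_self_eq_zero.1 this
    have : uH = (w : H) := by linear_combination (norm := module) h0
    rw [this]
    exact w.2
  have hval : ∀ ⦃x : A.closure.adjoint.domain⦄ ⦃y : A.closure.domain⦄, (x : H) = (y : H) →
      A.closure.adjoint x = A.closure y := fun x y hxy => (hCle.2 hxy.symm).symm
  exact le_antisymm (le_mk hdom hval) hCle

end St18

/-- A positive symmetric densely defined operator with finite equal deficiency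
indices `[m,m]`, `m ≥ 1`, has more than one semibounded self-adjoint extension;
consequently a positive symmetric operator with a unique semibounded
self-adjoint extension is essentially self-adjoint. -/
theorem stmt18 {H : Type*} [NormedAddCommGroup H] [InnerProductSpace ℂ H] [CompleteSpace H]
    (A : H →ₗ.[ℂ] H) (hdense : Dense (A.domain : Set H))
    (hsym : ∀ x y : A.domain, (inner ℂ (A x) (y : H) : ℂ) = inner ℂ (x : H) (A y))
    (hpos : ∀ x : A.domain, 0 ≤ (inner ℂ (x : H) (A x) : ℂ).re)
    (m : ℕ) (hm : 1 ≤ m)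
    (hdefPlus : Module.finrank ℂ (deficiencySpace A Complex.I) = m)
    (hdefMinus : Module.finrank ℂ (deficiencySpace A (-Complex.I)) = m) :
    (∃ S₁ S₂ : H →ₗ.[ℂ] H, S₁ ≠ S₂ ∧ IsSemibddSAExt A S₁ ∧ IsSemibddSAExt A S₂) ∧
    (∀ B : H →ₗ.[ℂ] H, Dense (B.domain : Set H) →
      (∀ x y : B.domain, (inner ℂ (B x) (y : H) : ℂ) = inner ℂ (x : H) (B y)) →
      (∀ x : B.domain, 0 ≤ (inner ℂ (x : H) (B x) : ℂ).re) →
      (∃! S : H →ₗ.[ℂ] H, IsSemibddSAExt B S) →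
      B.closure.adjoint = B.closure) := by
  constructor
  · refine ⟨St18.Sext A hdense hsym 1, St18.Sext A hdense hsym 2, ?_, ?_, ?_⟩
    · intro heq
      exact St18.Nt_one_ne_bot hdense hsym hpos hm hdefPlus
        (St18.distinct12 hdense hsym hpos heq)
    · exact St18.isSemibddSAExt_Sext hdense hsym hpos le_rfl
    · exact St18.isSemibddSAExt_Sext hdense hsym hpos (by norm_num)
  · intro B hBdense hBsym hBpos huniq
    obtain ⟨S, hS, huni⟩ := huniq
    have h1 : St18.Sext B hBdense hBsym 1 = S :=
      huni _ (St18.isSemibddSAExt_Sext hBdense hBsym hBpos le_rfl)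
    have h2 : St18.Sext B hBdense hBsym 2 = S :=
      huni _ (St18.isSemibddSAExt_Sext hBdense hBsym hBpos (by norm_num))
    have hbot : St18.Nt B 1 = ⊥ :=
      St18.distinct12 hBdense hBsym hBpos (h1.trans h2.symm)
    exact St18.closure_selfadjoint hBdense hBsym hBpos hbot
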